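/- Let f : 2^𝒩 → ℤ be an integer-valued rank function on the subsets of 𝒩 = {1,…,N}. Then there exists y ∈ ℕ^N with ∑_{n∈S} y_n ≤ f(S) for every S ⊆ 𝒩 and ∑_{n=1}^N y_n = f(𝒩). -/

import Mathlib

open Finset

/-- For every integer-valued rank function `f` there exists `y ∈ ℕ^N`
in the integral polymatroid of `f` with `∑_n y_n = f(𝒩)`. -/
theorem quantizedVCG_statement_7 (N : ℕ) (hN : 1 ≤ N)
    (f : Finset (Fin N) → ℤ)
    (hf_norm : f ∅ = 0)
    (hf_mono : ∀ S T : Finset (Fin N), S ⊆ T → f S ≤ f T)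
    (hf_sub : ∀ S T : Finset (Fin N), f (S ∩ T) + f (S ∪ T) ≤ f S + f T) :
    ∃ y : Fin N → ℕ,
      (∀ S : Finset (Fin N), ∑ n ∈ S, (y n : ℤ) ≤ f S) ∧
      ∑ n, (y n : ℤ) = f Finset.univ := by
  set y : Fin N → ℕ := fun i => (f (Iic i) - f (Iio i)).toNat with hy_def
  have hy : ∀ i, (y i : ℤ) = f (Iic i) - f (Iio i) := by
    intro i
    simp only [hy_def]
    exact Int.toNat_of_nonneg (sub_nonneg.2 (hf_mono _ _ Iio_subset_Iic_self))
  refine ⟨y, ?_, ?_⟩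
  · intro S
    induction S using Finset.strongInductionOn with
    | _ S ih =>
      rcases S.eq_empty_or_nonempty with rfl | hS
      · simp [hf_norm]
      · set m := S.max' hS with hm
        have hmS : m ∈ S := S.max'_mem hS
        have h1 : S ∩ Iio m = S.erase m := by
          ext x
          simp only [mem_inter, mem_Iio, mem_erase]
          constructor
          · rintro ⟨hx, hlt⟩; exact ⟨ne_of_lt hlt, hx⟩
          · rintro ⟨hne, hx⟩; exact ⟨hx, lt_of_le_of_ne (S.le_max' x hx) hne⟩
        have h2 : Iic m ⊆ S ∪ Iio m := by
          intro x hx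
          rcases lt_or_eq_of_le (mem_Iic.1 hx) with h | h
          · exact mem_union_right _ (mem_Iio.2 h)
          · exact mem_union_left _ (h ▸ hmS)
        have hsub := hf_sub S (Iio m)
        have hIH := ih (S.erase m) (erase_ssubset hmS)
        have hsum : ∑ n ∈ S, (y n : ℤ) = ∑ n ∈ S.erase m, (y n : ℤ) + y m :=
          (Finset.sum_erase_add S _ hmS).symm
        rw [hsum, hy m]
        have : f (Iic m) ≤ f (S ∪ Iio m) := hf_mono _ _ h2
        rw [h1] at hsub
        linarith
  · have g_step : ∀ k : Fin N,
        f (univ.filter (fun i : Fin N => (i : ℕ) < (k : ℕ) + 1))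
          - f (univ.filter (fun i : Fin N => (i : ℕ) < (k : ℕ))) = (y k : ℤ) := by
      intro k
      have hIic : Iic k = univ.filter (fun i : Fin N => (i : ℕ) < (k : ℕ) + 1) := by
        ext x; simp only [mem_Iic, mem_filter, mem_univ, true_and, Fin.le_def, Nat.lt_succ_iff]
      have hIio : Iio k = univ.filter (fun i : Fin N => (i : ℕ) < (k : ℕ)) := by
        ext x; simp only [mem_Iio, mem_filter, mem_univ, true_and, Fin.lt_def]
      rw [hy k, hIic, hIio]
    have htel : ∑ k ∈ Finset.range N,
        (f (univ.filter (fun i : Fin N => (i : ℕ) < k + 1))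
          - f (univ.filter (fun i : Fin N => (i : ℕ) < k)))
        = f (univ.filter (fun i : Fin N => (i : ℕ) < N))
          - f (univ.filter (fun i : Fin N => (i : ℕ) < 0)) :=
      Finset.sum_range_sub (fun k => f (univ.filter (fun i : Fin N => (i : ℕ) < k))) N
    have h0 : (univ.filter (fun i : Fin N => (i : ℕ) < 0)) = ∅ := by simp
    have hNfull : (univ.filter (fun i : Fin N => (i : ℕ) < N)) = univ := by
      apply filter_true_of_mem; intro x _; exact x.isLt
    rw [h0, hNfull, hf_norm, sub_zero] at htel
    rw [← htel, Finset.sum_range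
      (f := fun k => f (univ.filter (fun i : Fin N => (i : ℕ) < k + 1))
        - f (univ.filter (fun i : Fin N => (i : ℕ) < k)))]
    exact Finset.sum_congr rfl fun k _ => (g_step k).symm
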